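/- Let M > 0, δ₀ > 0, l₀ ∈ ℝ, and let w₀ ∈ L^∞((−∞, l₀]) satisfy w₀(x) = 0 for all sufficiently large negative x. Let w be the bounded classical solution of the problem w_t = w_xx − M (w_x)² for x < l₀, t > 0, with w(x,0) = w₀(x) for x ≤ l₀ and w(l₀, t) = δ₀ for t ≥ 0. Then w(x,t) → δ₀ as t → ∞, locally uniformly in x ∈ (−∞, l₀]. -/

import Mathlib

open Filter Topology Set MeasureTheory

noncomputable section

/-- `u` satisfies `u_t = u_xx + f(t,u)` for `x ∈ sx`, `t ∈ st`
(with the required differentiability in space and time). -/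
def SatPDE (f u : ℝ → ℝ → ℝ) (sx st : Set ℝ) : Prop :=
  ∀ x ∈ sx, ∀ t ∈ st,
    DifferentiableAt ℝ (fun y => u y t) x ∧
    DifferentiableAt ℝ (deriv fun y => u y t) x ∧
    HasDerivAt (fun τ => u x τ) (deriv (deriv fun y => u y t) x + f t (u x t)) t

/-- entire solution of `U_t = U_xx + f(t,U)` on `ℝ × ℝ`. -/
def EntireSol (f U : ℝ → ℝ → ℝ) : Prop := SatPDE f U Set.univ Set.univ

/-- classical (for `t > 0`) solution of the Cauchy problem with initial datum `u₀`. -/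
def CauchySol (f : ℝ → ℝ → ℝ) (u₀ : ℝ → ℝ) (u : ℝ → ℝ → ℝ) : Prop :=
  SatPDE f u Set.univ (Set.Ioi 0) ∧
  ContinuousOn (fun q : ℝ × ℝ => u q.1 q.2) (Set.univ ×ˢ Set.Ioi 0) ∧
  ∀ x, u x 0 = u₀ x

/-- `U` is `T`-periodic in time. -/
def TPer (T : ℝ) (U : ℝ → ℝ → ℝ) : Prop := ∀ x t, U x (t + T) = U x t

/-- `U` is spatially constant. -/
def SpatConst (U : ℝ → ℝ → ℝ) : Prop := ∀ x y t, U x t = U y t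

/-- `U` is symmetrically decreasing with respect to `x₀`. -/
def SymDecr (U : ℝ → ℝ → ℝ) (x₀ : ℝ) : Prop :=
  (∀ x t, U (2 * x₀ - x) t = U x t) ∧ ∀ x t : ℝ, x₀ < x → deriv (fun y => U y t) x < 0

/-- `v` is symmetric with respect to `x₀` and nonincreasing away from `x₀`. -/
def SymNonincr (v : ℝ → ℝ → ℝ) (x₀ : ℝ) : Prop :=
  (∀ x t, v (2 * x₀ - x) t = v x t) ∧
  (∀ x t : ℝ, x < x₀ → 0 ≤ deriv (fun y => v y t) x) ∧
  (∀ x t : ℝ, x₀ < x → deriv (fun y => v y t) x ≤ 0)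

/-- `g` solves the ODE `g' = f(t, g)` on the set `s`. -/
def ODESolOn (f : ℝ → ℝ → ℝ) (g : ℝ → ℝ) (s : Set ℝ) : Prop :=
  ∀ t ∈ s, HasDerivAt g (f t (g t)) t

/-- `p` is a nonnegative `T`-periodic solution of `p' = f(t,p)`. -/
def XPer (T : ℝ) (f : ℝ → ℝ → ℝ) (p : ℝ → ℝ) : Prop :=
  (∀ t, 0 ≤ p t) ∧ (∀ t, p (t + T) = p t) ∧ ODESolOn f p Set.univ

/-- `p` is the base of `U`, i.e. `U(x,t) → p(t)` as `|x| → ∞`. -/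
def HasBase (U : ℝ → ℝ → ℝ) (p : ℝ → ℝ) : Prop :=
  ∀ t, Tendsto (fun x => U x t) atTop (nhds (p t)) ∧
    Tendsto (fun x => U x t) atBot (nhds (p t))

/-- `U` is an ω-limit solution of `u`: an entire solution which is the locally uniform
limit of `u(x, t + kⱼ T)` for some sequence of positive integers `kⱼ → ∞`. -/
def OmegaLimitSol (T : ℝ) (f u U : ℝ → ℝ → ℝ) : Prop :=
  EntireSol f U ∧
  ∃ k : ℕ → ℕ, StrictMono k ∧ (∀ j, 0 < k j) ∧
    TendstoLocallyUniformly
      (fun j (q : ℝ × ℝ) => u q.1 (q.2 + (k j : ℝ) * T)) (fun q => U q.1 q.2) atTop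

/-- `φ` is an ω-limit point of `u`: `u(·, kⱼ T) → φ` in `L^∞_loc(ℝ)`. -/
def OmegaLimitPt (T : ℝ) (u : ℝ → ℝ → ℝ) (φ : ℝ → ℝ) : Prop :=
  ∃ k : ℕ → ℕ, StrictMono k ∧ (∀ j, 0 < k j) ∧
    TendstoLocallyUniformly (fun j x => u x ((k j : ℝ) * T)) φ atTop

/-- the solution `h(·;a)` of `h' = f(t,h)`, `h(0) = a`, is `T`-monotone nondecreasing
(formulated for every solution with initial value `a`; the solution is unique). -/
def TMonNondecFrom (T : ℝ) (f : ℝ → ℝ → ℝ) (a : ℝ) : Prop :=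
  ∀ g : ℝ → ℝ, ODESolOn f g (Set.Ici 0) → g 0 = a → ∀ t : ℝ, 0 ≤ t → g t ≤ g (t + T)

/-- the solution `h(·;a)` is `T`-monotone decreasing. -/
def TMonDecFrom (T : ℝ) (f : ℝ → ℝ → ℝ) (a : ℝ) : Prop :=
  ∀ g : ℝ → ℝ, ODESolOn f g (Set.Ici 0) → g 0 = a → ∀ t : ℝ, 0 ≤ t → g (t + T) < g t

/-- the solution `h(·;a)` is `T`-monotone nonincreasing. -/
def TMonNonincFrom (T : ℝ) (f : ℝ → ℝ → ℝ) (a : ℝ) : Prop :=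
  ∀ g : ℝ → ℝ, ODESolOn f g (Set.Ici 0) → g 0 = a → ∀ t : ℝ, 0 ≤ t → g (t + T) ≤ g t

/-- `p ∈ Y_per`. -/
def YPer (T : ℝ) (f : ℝ → ℝ → ℝ) (p : ℝ → ℝ) : Prop :=
  XPer T f p ∧ ∃ ε > 0, ∀ a ∈ Set.Ioo (p 0) (p 0 + ε), TMonNondecFrom T f a

/-- `p` is linearly stable: `∫₀ᵀ ∂ᵤf(t, p(t)) dt < 0`. -/
def LinStable (T : ℝ) (f : ℝ → ℝ → ℝ) (p : ℝ → ℝ) : Prop :=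
  (∫ t in (0:ℝ)..T, deriv (f t) (p t)) < 0

/-- `p` is stable from above for the ODE `h' = f(t,h)`. -/
def StableFromAbove (f : ℝ → ℝ → ℝ) (p : ℝ → ℝ) : Prop :=
  ∀ ε > 0, ∃ δ > 0, ∀ a ∈ Set.Icc (p 0) (p 0 + δ),
    ∀ g : ℝ → ℝ, ODESolOn f g (Set.Ici 0) → g 0 = a → ∀ t : ℝ, 0 ≤ t → |g t - p t| ≤ ε

/-- `p` is stable from below for the ODE `h' = f(t,h)`. -/
def StableFromBelow (f : ℝ → ℝ → ℝ) (p : ℝ → ℝ) : Prop :=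
  ∀ ε > 0, ∃ δ > 0, ∀ a ∈ Set.Icc (p 0 - δ) (p 0),
    ∀ g : ℝ → ℝ, ODESolOn f g (Set.Ici 0) → g 0 = a → ∀ t : ℝ, 0 ≤ t → |g t - p t| ≤ ε

/-- `Zsc w`: the number of sign changes of `w` on `ℝ` (a value in `ℕ∞`). -/
def Zsc (w : ℝ → ℝ) : ℕ∞ :=
  ⨆ k ∈ {k : ℕ | ∃ x : Fin (k + 1) → ℝ, StrictMono x ∧
      ∀ i : Fin k, w (x i.castSucc) * w (x i.succ) < 0}, (k : ℕ∞)



/-- The (unnormalized) error function `∫₀^z e^{-s²/4} ds`. -/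
def Perf (z : ℝ) : ℝ := ∫ s in (0:ℝ)..z, Real.exp (-(s^2)/4)

lemma contPerfInt : Continuous fun s : ℝ => Real.exp (-(s^2)/4) := by
  continuity

lemma Perf_hasDerivAt (z : ℝ) : HasDerivAt Perf (Real.exp (-(z^2)/4)) z :=
  (contPerfInt.integral_hasStrictDerivAt 0 z).hasDerivAt

lemma Perf_continuous : Continuous Perf := by
  exact Differentiable.continuous (fun z => (Perf_hasDerivAt z).differentiableAt)

lemma Perf_nonneg {z : ℝ} (hz : 0 ≤ z) : 0 ≤ Perf z := by
  apply intervalIntegral.integral_nonneg hz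
  intro s _; positivity

lemma Perf_mono : Monotone Perf := by
  intro a b hab
  have h1 : IntervalIntegrable (fun s : ℝ => Real.exp (-(s^2)/4)) volume 0 a :=
    contPerfInt.intervalIntegrable _ _
  have h2 : IntervalIntegrable (fun s : ℝ => Real.exp (-(s^2)/4)) volume a b :=
    contPerfInt.intervalIntegrable _ _
  have := intervalIntegral.integral_add_adjacent_intervals h1 h2
  have hnn : 0 ≤ ∫ s in a..b, Real.exp (-(s^2)/4) := by
    apply intervalIntegral.integral_nonneg hab
    intro s _; positivity
  unfold Perf
  linarith [this]

lemma Perf_pos : 0 < Perf 1 := by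
  apply intervalIntegral.intervalIntegral_pos_of_pos (f := fun s : ℝ => Real.exp (-(s^2)/4))
  · exact contPerfInt.intervalIntegrable _ _
  · intro s; positivity
  · norm_num

lemma Perf_le {z : ℝ} (hz : 0 ≤ z) : Perf z ≤ z := by
  have : Perf z ≤ ∫ s in (0:ℝ)..z, (1:ℝ) := by
    apply intervalIntegral.integral_mono_on hz (contPerfInt.intervalIntegrable _ _)
      (intervalIntegrable_const)
    intro s _
    calc Real.exp (-(s^2)/4) ≤ Real.exp 0 := Real.exp_le_exp.mpr (by nlinarith [sq_nonneg s])
      _ = 1 := Real.exp_zero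
  simpa using this



/-- Second derivative test at a local maximum (HasDerivAt version). -/
lemma second_deriv_test {f f' : ℝ → ℝ} {a c : ℝ}
    (hf : ∀ᶠ y in 𝓝 a, HasDerivAt f (f' y) y)
    (hf' : HasDerivAt f' c a) (hmax : IsLocalMax f a) : c ≤ 0 := by
  by_contra hc
  push_neg at hc
  have hfa : f' a = 0 := hmax.hasDerivAt_eq_zero hf.self_of_nhds
  have hsub : 𝓝[>] a ≤ 𝓝[≠] a :=
    nhdsWithin_mono _ (fun y (hy : a < y) => Set.mem_compl_singleton_iff.mpr (ne_of_gt hy))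
  have hslope : Tendsto (slope f' a) (𝓝[>] a) (𝓝 c) :=
    (hasDerivAt_iff_tendsto_slope.mp hf').mono_left hsub
  have hpos : ∀ᶠ y in 𝓝[>] a, 0 < f' y := by
    filter_upwards [hslope.eventually (eventually_gt_nhds (by linarith : (0:ℝ) < c)),
      self_mem_nhdsWithin] with y hy hy'
    rw [slope_def_field, hfa, sub_zero] at hy
    rcases div_pos_iff.mp hy with ⟨h, _⟩ | ⟨_, h⟩
    · exact h
    · exact absurd (sub_pos.mpr (show a < y from hy')) (by linarith)
  have hall : ∀ᶠ y in 𝓝 a, HasDerivAt f (f' y) y ∧ f y ≤ f a := hf.and hmax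
  rcases Metric.eventually_nhds_iff.mp hall with ⟨δ₁, hδ₁, h1⟩
  rcases Metric.eventually_nhds_iff.mp (eventually_nhdsWithin_iff.mp hpos) with ⟨δ₂, hδ₂, h2'⟩
  set δ := min δ₁ δ₂ / 2 with hδdef
  have hδ : 0 < δ := by positivity
  have hδ1 : δ < δ₁ := by
    have := min_le_left δ₁ δ₂; simp only [hδdef]; linarith
  have hδ2 : δ < δ₂ := by
    have := min_le_right δ₁ δ₂; simp only [hδdef]; linarith
  have hball : ∀ y ∈ Icc a (a + δ), HasDerivAt f (f' y) y ∧ f y ≤ f a := by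
    intro y hy
    apply h1
    rw [Real.dist_eq, abs_lt]
    exact ⟨by linarith [hy.1], by linarith [hy.2]⟩
  have hmono : StrictMonoOn f (Icc a (a + δ)) := by
    apply strictMonoOn_of_deriv_pos (convex_Icc _ _)
    · exact fun y hy => ((hball y hy).1).differentiableAt.continuousAt.continuousWithinAt
    · intro y hy
      rw [interior_Icc] at hy
      rw [((hball y ⟨le_of_lt hy.1, le_of_lt hy.2⟩).1).deriv]
      apply h2'
      · rw [Real.dist_eq, abs_lt]
        exact ⟨by linarith [hy.1], by linarith [hy.2]⟩
      · exact hy.1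
  have := hmono (left_mem_Icc.mpr (by linarith)) (right_mem_Icc.mpr (by linarith))
    (by linarith : a < a + δ)
  linarith [(hball (a + δ) (right_mem_Icc.mpr (by linarith))).2]

/-- If `g` has derivative `c` at `t₁` and `g ≤ g t₁` on `[t₀, t₁]` with `t₀ < t₁`, then `0 ≤ c`. -/
lemma left_max_deriv_nonneg {g : ℝ → ℝ} {c t₀ t₁ : ℝ} (h : HasDerivAt g c t₁)
    (hlt : t₀ < t₁) (hmax : ∀ t ∈ Icc t₀ t₁, g t ≤ g t₁) : 0 ≤ c := by
  have hsub : 𝓝[<] t₁ ≤ 𝓝[≠] t₁ :=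
    nhdsWithin_mono _ (fun y (hy : y < t₁) => Set.mem_compl_singleton_iff.mpr (ne_of_lt hy))
  have hslope : Tendsto (slope g t₁) (𝓝[<] t₁) (𝓝 c) :=
    (hasDerivAt_iff_tendsto_slope.mp h).mono_left hsub
  have : ∀ᶠ t in 𝓝[<] t₁, 0 ≤ slope g t₁ t := by
    filter_upwards [Ioo_mem_nhdsLT_of_mem ⟨hlt, le_refl t₁⟩] with t ht
    rw [slope_def_field]
    have h1 : g t - g t₁ ≤ 0 := by linarith [hmax t ⟨le_of_lt ht.1, le_of_lt ht.2⟩]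
    have h2 : t - t₁ < 0 := by linarith [ht.2]
    rw [div_nonneg_iff]; right; exact ⟨h1, h2.le⟩
  exact ge_of_tendsto hslope this

/-- `|log a - log b| ≤ |a - b| / min a b` for positive reals. -/
lemma abs_log_sub_log_le {a b : ℝ} (ha : 0 < a) (hb : 0 < b) :
    |Real.log a - Real.log b| ≤ |a - b| / min a b := by
  wlog hab : b ≤ a generalizing a b
  · rw [abs_sub_comm, abs_sub_comm a b, min_comm]
    exact this hb ha (by linarith)
  have h1 : Real.log a - Real.log b = Real.log (a / b) := (Real.log_div ha.ne' hb.ne').symm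
  have h2 : Real.log (a / b) ≤ a / b - 1 := Real.log_le_sub_one_of_pos (by positivity)
  have h3 : 0 ≤ Real.log a - Real.log b := by
    rw [sub_nonneg]
    exact Real.log_le_log hb hab
  rw [abs_of_nonneg h3, abs_of_nonneg (by linarith : (0:ℝ) ≤ a - b), min_eq_right hab]
  rw [h1]
  calc Real.log (a / b) ≤ a / b - 1 := h2
    _ = (a - b) / b := by field_simp

def zfun (l₁ y τ : ℝ) : ℝ := (l₁ + 1 - y) / Real.sqrt τ

def Gbar (A l₁ y τ : ℝ) : ℝ := A * Perf (zfun l₁ y τ)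

def GbarX (A l₁ y τ : ℝ) : ℝ :=
  -(A * Real.exp (-(zfun l₁ y τ)^2/4) / Real.sqrt τ)

def GbarT (A l₁ y τ : ℝ) : ℝ :=
  -(A * zfun l₁ y τ * Real.exp (-(zfun l₁ y τ)^2/4) / (2*τ))

lemma zfun_hasDerivAt_x (l₁ : ℝ) (τ : ℝ) (y : ℝ) :
    HasDerivAt (fun z => zfun l₁ z τ) (-(Real.sqrt τ)⁻¹) y := by
  have h : HasDerivAt (fun z : ℝ => l₁ + 1 - z) (-1) y := by
    simpa using (hasDerivAt_id y).const_sub (l₁ + 1)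
  have := h.div_const (Real.sqrt τ)
  refine this.congr_deriv (Eq.symm ?_)
  field_simp

lemma Gbar_hasDerivAt_x (A l₁ : ℝ) {τ : ℝ} (hτ : 0 < τ) (y : ℝ) :
    HasDerivAt (fun z => Gbar A l₁ z τ) (GbarX A l₁ y τ) y := by
  have hsτ : Real.sqrt τ ≠ 0 := (Real.sqrt_pos.mpr hτ).ne'
  have h := ((Perf_hasDerivAt (zfun l₁ y τ)).comp y (zfun_hasDerivAt_x l₁ τ y)).const_mul A
  refine h.congr_deriv (Eq.symm ?_)
  unfold GbarX
  field_simp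

lemma GbarX_hasDerivAt_x (A l₁ : ℝ) {τ : ℝ} (hτ : 0 < τ) (y : ℝ) :
    HasDerivAt (fun z => GbarX A l₁ z τ) (GbarT A l₁ y τ) y := by
  have hsτ : Real.sqrt τ ≠ 0 := (Real.sqrt_pos.mpr hτ).ne'
  have hsq : Real.sqrt τ ^ 2 = τ := Real.sq_sqrt hτ.le
  have h1 := zfun_hasDerivAt_x l₁ τ y
  have h2 : HasDerivAt (fun z => -(zfun l₁ z τ)^2/4)
      (-(2 * zfun l₁ y τ ^ 1 * -(Real.sqrt τ)⁻¹) / 4) y := by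
    have := (h1.pow 2).neg.div_const 4
    refine this.congr_deriv (Eq.symm ?_)
    norm_num
  have h3 := h2.exp
  have h4 := ((h3.const_mul A).div_const (Real.sqrt τ)).neg
  refine h4.congr_deriv (Eq.symm ?_)
  unfold GbarT zfun
  field_simp
  linear_combination (-(A*l₁*4) + A*y*4 - A*4) * hsq

lemma Gbar_hasDerivAt_t (A l₁ y : ℝ) {τ : ℝ} (hτ : 0 < τ) :
    HasDerivAt (fun σ => Gbar A l₁ y σ) (GbarT A l₁ y τ) τ := by
  have hsτ : Real.sqrt τ ≠ 0 := (Real.sqrt_pos.mpr hτ).ne'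
  have hsq : Real.sqrt τ ^ 2 = τ := Real.sq_sqrt hτ.le
  have hs : HasDerivAt Real.sqrt (1 / (2 * Real.sqrt τ)) τ := Real.hasDerivAt_sqrt hτ.ne'
  have hinv := hs.inv hsτ
  have hz : HasDerivAt (fun σ => zfun l₁ y σ)
      ((l₁ + 1 - y) * (-(1 / (2 * Real.sqrt τ)) / Real.sqrt τ ^ 2)) τ := by
    have := hinv.const_mul (l₁ + 1 - y)
    simpa [zfun, div_eq_mul_inv] using this
  have h := ((Perf_hasDerivAt (zfun l₁ y τ)).comp τ hz).const_mul A
  refine h.congr_deriv (Eq.symm ?_)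
  unfold GbarT zfun
  rw [← hsq]
  field_simp
  rw [Real.sqrt_sq (Real.sqrt_nonneg τ)]


lemma zfun_nonneg {l₁ y τ : ℝ} (hy : y ≤ l₁) : 0 ≤ zfun l₁ y τ :=
  div_nonneg (by linarith) (Real.sqrt_nonneg τ)

lemma Gbar_nonneg {A : ℝ} (hA : 0 ≤ A) {l₁ y τ : ℝ} (hy : y ≤ l₁) :
    0 ≤ Gbar A l₁ y τ :=
  mul_nonneg hA (Perf_nonneg (zfun_nonneg hy))

lemma Gbar_one {A : ℝ} (hA : 0 ≤ A) {l₁ y : ℝ} (hy : y ≤ l₁) :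
    A * Perf 1 ≤ Gbar A l₁ y 1 := by
  unfold Gbar zfun
  rw [Real.sqrt_one, div_one]
  exact mul_le_mul_of_nonneg_left (Perf_mono (by linarith)) hA

lemma Gbar_continuousOn (A l₁ : ℝ) :
    ContinuousOn (fun q : ℝ × ℝ => Gbar A l₁ q.1 q.2) (Set.univ ×ˢ Set.Ici 1) := by
  apply ContinuousOn.mul continuousOn_const
  apply Perf_continuous.comp_continuousOn
  apply ContinuousOn.div
  · fun_prop
  · exact (Real.continuous_sqrt.comp continuous_snd).continuousOn
  · rintro ⟨y, τ⟩ ⟨-, hτ⟩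
    have : (0:ℝ) < τ := lt_of_lt_of_le one_pos hτ
    exact (Real.sqrt_pos.mpr this).ne'

/-- Comparison principle on the half line `(-∞, l₁]` for times in `[1, ∞)`. -/
lemma halfline_comparison (l₁ : ℝ) (u : ℝ → ℝ → ℝ) (C' : ℝ) (hC' : 0 < C')
    (hbdd : ∀ x ≤ l₁, ∀ t, 1 ≤ t → u x t ≤ C')
    (hcont : ContinuousOn (fun q : ℝ × ℝ => u q.1 q.2) (Set.Iic l₁ ×ˢ Set.Ici 1))
    (hpde : ∀ t, 1 ≤ t → ∃ u' u'' : ℝ → ℝ,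
        (∀ y < l₁, HasDerivAt (fun z => u z t) (u' y) y ∧ HasDerivAt u' (u'' y) y) ∧
        (∀ x < l₁, HasDerivAt (fun τ => u x τ) (u'' x) t))
    (hbc : ∀ t, 1 ≤ t → u l₁ t ≤ 0) :
    ∀ x ≤ l₁, ∀ t, 1 ≤ t → u x t ≤ (C' / Perf 1) * Perf (zfun l₁ x t) := by
  set A := C' / Perf 1 with hAdef
  have hA : 0 < A := div_pos hC' Perf_pos
  have hAP : A * Perf 1 = C' := by
    rw [hAdef]; exact div_mul_cancel₀ C' Perf_pos.ne'
  intro x hx t ht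
  -- the key estimate with the ε-correction
  have key : ∀ ε > 0, ∀ y ≤ l₁, ∀ τ, 1 ≤ τ → τ ≤ t →
      u y τ - Gbar A l₁ y τ ≤ ε * ((y - l₁)^2 + 3*τ) := by
    intro ε hε
    set R := Real.sqrt (C'/ε) with hRdef
    have hR0 : 0 ≤ R := Real.sqrt_nonneg _
    have hRsq : R^2 = C'/ε := Real.sq_sqrt (by positivity)
    set v : ℝ → ℝ → ℝ := fun y τ => u y τ - Gbar A l₁ y τ - ε*((y-l₁)^2 + 3*τ) with hvdef
    suffices hv : ∀ y ≤ l₁, ∀ τ, 1 ≤ τ → τ ≤ t → v y τ ≤ 0 by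
      intro y hy τ hτ1 hτt
      have := hv y hy τ hτ1 hτt
      simp only [hvdef] at this
      linarith
    -- far-field: v ≤ 0 when y ≤ l₁ - R
    have farcase : ∀ y ≤ l₁ - R, ∀ τ, 1 ≤ τ → τ ≤ t → v y τ ≤ 0 := by
      intro y hy τ hτ1 hτt
      have hyl : y ≤ l₁ := by linarith
      have h1 : u y τ ≤ C' := hbdd y hyl τ hτ1
      have h2 : 0 ≤ Gbar A l₁ y τ := Gbar_nonneg hA.le hyl
      have h3 : R^2 ≤ (y - l₁)^2 := by nlinarith
      have h4 : C' ≤ ε * (y - l₁)^2 := by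
        have : ε * R^2 = C' := by rw [hRsq]; field_simp
        nlinarith
      simp only [hvdef]
      nlinarith
    -- boundary: v l₁ τ < 0
    have bdcase : ∀ τ, 1 ≤ τ → τ ≤ t → v l₁ τ < 0 := by
      intro τ hτ1 hτt
      have h1 : u l₁ τ ≤ 0 := hbc τ hτ1
      have h2 : 0 ≤ Gbar A l₁ l₁ τ := Gbar_nonneg hA.le le_rfl
      simp only [hvdef]
      nlinarith
    -- initial: v y 1 < 0
    have initcase : ∀ y ≤ l₁, v y 1 < 0 := by
      intro y hy
      have h1 : u y 1 ≤ C' := hbdd y hy 1 le_rfl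
      have h2 : A * Perf 1 ≤ Gbar A l₁ y 1 := Gbar_one hA.le hy
      simp only [hvdef]
      nlinarith
    -- maximum over the compact box
    intro y hy τ hτ1 hτt
    rcases le_or_gt y (l₁ - R) with hfar | hnear
    · exact farcase y hfar τ hτ1 hτt
    have hQc : IsCompact ((Icc (l₁ - R) l₁) ×ˢ (Icc 1 t)) :=
      isCompact_Icc.prod isCompact_Icc
    have hQne : ((Icc (l₁ - R) l₁) ×ˢ (Icc 1 t)).Nonempty :=
      ⟨(l₁, 1), Set.mk_mem_prod ⟨by linarith, le_rfl⟩ ⟨le_rfl, by linarith⟩⟩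
    have hQsub : (Icc (l₁ - R) l₁) ×ˢ (Icc 1 t) ⊆ Set.Iic l₁ ×ˢ Set.Ici 1 := by
      rintro ⟨a, b⟩ ⟨ha, hb⟩
      exact ⟨ha.2, hb.1⟩
    have hvcont : ContinuousOn (fun q : ℝ × ℝ => v q.1 q.2)
        ((Icc (l₁ - R) l₁) ×ˢ (Icc 1 t)) := by
      simp only [hvdef]
      apply ContinuousOn.sub
      apply ContinuousOn.sub
      · exact hcont.mono hQsub
      · exact (Gbar_continuousOn A l₁).mono (by
          rintro ⟨a, b⟩ ⟨ha, hb⟩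
          exact ⟨trivial, hb.1⟩)
      · fun_prop
    obtain ⟨⟨xs, ts⟩, hmem, hmax⟩ := hQc.exists_isMaxOn hQne hvcont
    have hmx1 : l₁ - R ≤ xs := hmem.1.1
    have hmx2 : xs ≤ l₁ := hmem.1.2
    have hmt1 : 1 ≤ ts := hmem.2.1
    have hmt2 : ts ≤ t := hmem.2.2
    have hmax' : ∀ a b : ℝ, a ∈ Icc (l₁ - R) l₁ → b ∈ Icc 1 t → v a b ≤ v xs ts := by
      intro a b haa hbb
      exact hmax (Set.mk_mem_prod haa hbb)
    by_cases hvle : v xs ts ≤ 0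
    · have := hmax' y τ ⟨hnear.le, hy⟩ ⟨hτ1, hτt⟩
      linarith
    push_neg at hvle
    exfalso
    have hxs1 : l₁ - R < xs := by
      rcases lt_or_eq_of_le hmx1 with h | h
      · exact h
      · exfalso
        have := farcase xs (le_of_eq h.symm) ts hmt1 hmt2
        linarith
    have hxs2 : xs < l₁ := by
      rcases lt_or_eq_of_le hmx2 with h | h
      · exact h
      · exfalso
        have := bdcase ts hmt1 hmt2
        rw [← h] at this
        linarith
    have hts1 : 1 < ts := by
      rcases lt_or_eq_of_le hmt1 with h | h
      · exact h
      · exfalso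
        have := initcase xs hmx2
        rw [h] at this
        linarith
    have htspos : (0:ℝ) < ts := by linarith
    obtain ⟨u', u'', hu_space, hu_time⟩ := hpde ts (by linarith)
    -- spatial local maximum
    have hlocmax : IsLocalMax (fun z => v z ts) xs := by
      filter_upwards [Ioo_mem_nhds hxs1 hxs2] with z hz
      exact hmax' z ts ⟨hz.1.le, hz.2.le⟩ ⟨hmt1, hmt2⟩
    have hv'ev : ∀ᶠ z in 𝓝 xs, HasDerivAt (fun a => v a ts)
        (u' z - GbarX A l₁ z ts - ε*(2*(z-l₁))) z := by
      filter_upwards [Iio_mem_nhds hxs2] with z hz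
      have h1 := (hu_space z hz).1
      have h2 := Gbar_hasDerivAt_x A l₁ htspos z
      have h3 : HasDerivAt (fun a : ℝ => ε*((a-l₁)^2 + 3*ts)) (ε*(2*(z-l₁))) z := by
        have := ((((hasDerivAt_id z).sub_const l₁).pow 2).add_const (3*ts)).const_mul ε
        refine this.congr_deriv (Eq.symm ?_)
        simp only [id_eq, pow_one]
        ring
      exact (h1.sub h2).sub h3
    have hv'' : HasDerivAt (fun z => u' z - GbarX A l₁ z ts - ε*(2*(z-l₁)))
        (u'' xs - GbarT A l₁ xs ts - 2*ε) xs := by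
      have h1 := (hu_space xs hxs2).2
      have h2 := GbarX_hasDerivAt_x A l₁ htspos xs
      have h3 : HasDerivAt (fun z : ℝ => ε*(2*(z-l₁))) (2*ε) xs := by
        have := (((hasDerivAt_id xs).sub_const l₁).const_mul 2).const_mul ε
        refine this.congr_deriv (Eq.symm ?_)
        ring
      exact (h1.sub h2).sub h3
    have hspace : u'' xs - GbarT A l₁ xs ts - 2*ε ≤ 0 :=
      second_deriv_test hv'ev hv'' hlocmax
    -- time derivative at the maximum
    have htime : HasDerivAt (fun τ => v xs τ) (u'' xs - GbarT A l₁ xs ts - 3*ε) ts := by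
      have h1 := hu_time xs hxs2
      have h2 := Gbar_hasDerivAt_t A l₁ xs htspos
      have h3 : HasDerivAt (fun τ : ℝ => ε*((xs-l₁)^2 + 3*τ)) (3*ε) ts := by
        have := (((hasDerivAt_id ts).const_mul 3).const_add ((xs-l₁)^2)).const_mul ε
        refine this.congr_deriv (Eq.symm ?_)
        ring
      exact (h1.sub h2).sub h3
    have htpos : 0 ≤ u'' xs - GbarT A l₁ xs ts - 3*ε := by
      apply left_max_deriv_nonneg htime hts1
      intro τ hτ
      exact hmax' xs τ ⟨hxs1.le, hxs2.le⟩ ⟨hτ.1, le_trans hτ.2 hmt2⟩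
    linarith
  -- conclude by letting ε → 0
  by_contra hlt
  push_neg at hlt
  set d := u x t - A * Perf (zfun l₁ x t) with hd
  have hdpos : 0 < d := by simp only [hd]; linarith
  set S := (x - l₁)^2 + 3*t with hS
  have hSpos : 0 < S := by simp only [hS]; nlinarith
  have := key (d/(2*S)) (by positivity) x hx t ht le_rfl
  have heq : d/(2*S) * S = d/2 := by field_simp
  simp only [Gbar] at this
  rw [heq] at this
  simp only [hd] at this ⊢
  linarith


theorem halfline_convergence
    (M δ₀ l₀ : ℝ) (hM : 0 < M) (hδ₀ : 0 < δ₀)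
    (w₀ : ℝ → ℝ) (hw₀bdd : ∃ C, ∀ x ≤ l₀, |w₀ x| ≤ C)
    (hw₀zero : ∃ l : ℝ, ∀ x ≤ l, w₀ x = 0)
    (w : ℝ → ℝ → ℝ)
    (hwbdd : ∃ C, ∀ x t : ℝ, x ≤ l₀ → 0 ≤ t → |w x t| ≤ C)
    (hwcont : ContinuousOn (fun q : ℝ × ℝ => w q.1 q.2) (Set.Iic l₀ ×ˢ Set.Ioi 0))
    (hwpde : ∀ x < l₀, ∀ t > (0:ℝ),
      DifferentiableAt ℝ (fun y => w y t) x ∧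
      DifferentiableAt ℝ (deriv fun y => w y t) x ∧
      HasDerivAt (fun τ => w x τ)
        (deriv (deriv fun y => w y t) x - M * (deriv (fun y => w y t) x) ^ 2) t)
    (hwbc : ∀ t > (0:ℝ), w l₀ t = δ₀)
    (hwic : ∀ᵐ x ∂(volume.restrict (Set.Iic l₀)),
      Tendsto (fun t => w x t) (nhdsWithin 0 (Set.Ioi 0)) (nhds (w₀ x))) :
    ∀ K ⊆ Set.Iic l₀, IsCompact K →
      TendstoUniformlyOn (fun (t : ℝ) (x : ℝ) => w x t) (fun _ => δ₀) atTop K := by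
  intro K hK hKc
  rcases K.eq_empty_or_nonempty with hKe | hKne
  · rw [hKe]; exact tendstoUniformlyOn_empty
  obtain ⟨C, hC⟩ := hwbdd
  have hC0 : 0 ≤ C := le_trans (abs_nonneg _) (hC l₀ 1 le_rfl zero_le_one)
  set b := Real.exp (-(M*δ₀)) with hbdef
  have hbpos : 0 < b := Real.exp_pos _
  set ψ : ℝ → ℝ → ℝ := fun x t => Real.exp (-(M * w x t)) with hψdef
  set m := Real.exp (-(M*C)) with hmdef
  have hmpos : 0 < m := Real.exp_pos _
  set C' := Real.exp (M*C) with hC'def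
  have hC'pos : 0 < C' := Real.exp_pos _
  have hψub : ∀ x ≤ l₀, ∀ t, 0 ≤ t → ψ x t ≤ C' := by
    intro x hx t ht
    apply Real.exp_le_exp.mpr
    have := abs_le.mp (hC x t hx ht)
    nlinarith [this.1]
  have hψlb : ∀ x ≤ l₀, ∀ t, 0 ≤ t → m ≤ ψ x t := by
    intro x hx t ht
    apply Real.exp_le_exp.mpr
    have := abs_le.mp (hC x t hx ht)
    nlinarith [this.2]
  have hb_le : b ≤ C' := by
    apply Real.exp_le_exp.mpr
    nlinarith
  have hsub : Set.Iic l₀ ×ˢ Set.Ici (1:ℝ) ⊆ Set.Iic l₀ ×ˢ Set.Ioi 0 := by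
    rintro ⟨a, c⟩ ⟨ha, hc⟩
    exact ⟨ha, show (0:ℝ) < c from lt_of_lt_of_le zero_lt_one hc⟩
  have hψcont : ContinuousOn (fun q : ℝ × ℝ => ψ q.1 q.2) (Set.Iic l₀ ×ˢ Set.Ici 1) := by
    apply ContinuousOn.rexp
    exact ((continuousOn_const.mul (hwcont.mono hsub)).neg)
  -- the PDE package for ψ
  have hpack : ∀ t, 1 ≤ t → ∃ u' u'' : ℝ → ℝ,
      (∀ y < l₀, HasDerivAt (fun z => ψ z t) (u' y) y ∧ HasDerivAt u' (u'' y) y) ∧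
      (∀ x < l₀, HasDerivAt (fun τ => ψ x τ) (u'' x) t) := by
    intro t ht
    have ht0 : (0:ℝ) < t := lt_of_lt_of_le zero_lt_one ht
    refine ⟨fun y => -(M * deriv (fun z => w z t) y) * ψ y t,
      fun y => (-(M * deriv (deriv fun z => w z t) y)
        + (M * deriv (fun z => w z t) y)^2) * ψ y t, ?_, ?_⟩
    · intro y hy
      obtain ⟨hw1, hw2, hw3⟩ := hwpde y hy t ht0
      have h1 : HasDerivAt (fun z => w z t) (deriv (fun z => w z t) y) y := hw1.hasDerivAt
      have hψ' : HasDerivAt (fun z => ψ z t)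
          (-(M * deriv (fun z => w z t) y) * ψ y t) y := by
        have h2 := ((h1.const_mul M).neg).exp
        refine h2.congr_deriv (Eq.symm ?_)
        simp only [hψdef, Pi.neg_apply]
        ring
      refine ⟨hψ', ?_⟩
      have hD : HasDerivAt (deriv fun z => w z t) ((deriv (deriv fun z => w z t)) y) y :=
        hw2.hasDerivAt
      have hprod := ((hD.const_mul M).neg).mul hψ'
      refine hprod.congr_deriv (Eq.symm ?_)
      simp only [hψdef, Pi.neg_apply]
      ring
    · intro x hxl
      obtain ⟨hw1, hw2, hw3⟩ := hwpde x hxl t ht0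
      have h2 := ((hw3.const_mul M).neg).exp
      refine h2.congr_deriv (Eq.symm ?_)
      simp only [hψdef, Pi.neg_apply]
      ring
  -- comparison from above and below
  have hup : ∀ x ≤ l₀, ∀ t, 1 ≤ t → ψ x t - b ≤ (C'/Perf 1) * Perf (zfun l₀ x t) := by
    have := halfline_comparison l₀ (fun x t => ψ x t - b) C' hC'pos
      (by intro x hx t ht; have := hψub x hx t (by linarith); linarith)
      (hψcont.sub continuousOn_const)
      (by
        intro t ht
        obtain ⟨u', u'', h1, h2⟩ := hpack t ht
        exact ⟨u', u'', fun y hy => ⟨((h1 y hy).1).sub_const b, (h1 y hy).2⟩,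
          fun x hx => (h2 x hx).sub_const b⟩)
      (by
        intro t ht
        have hb := hwbc t (by linarith)
        simp only [hψdef, hb, hbdef, sub_self, le_refl])
    exact this
  have hdn : ∀ x ≤ l₀, ∀ t, 1 ≤ t → b - ψ x t ≤ (C'/Perf 1) * Perf (zfun l₀ x t) := by
    have := halfline_comparison l₀ (fun x t => b - ψ x t) C' hC'pos
      (by
        intro x hx t ht
        have := hψlb x hx t (by linarith)
        linarith)
      (continuousOn_const.sub hψcont)
      (by
        intro t ht
        obtain ⟨u', u'', h1, h2⟩ := hpack t ht
        exact ⟨fun y => -(u' y), fun y => -(u'' y),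
          fun y hy => ⟨((h1 y hy).1).const_sub b, ((h1 y hy).2).neg⟩,
          fun x hx => (h2 x hx).const_sub b⟩)
      (by
        intro t ht
        have hb := hwbc t (by linarith)
        simp only [hψdef, hb, hbdef, sub_self, le_refl])
    exact this
  -- pointwise estimate on K
  obtain ⟨L, hL⟩ := hKc.bddBelow
  set m' := min m b with hm'def
  have hm'pos : 0 < m' := lt_min hmpos hbpos
  set B := l₀ + 1 - L with hBdef
  set D := (C'/Perf 1) * B / (M * m') with hDdef
  have hB0 : 0 < B := by
    obtain ⟨x₀, hx₀⟩ := hKne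
    have h1 : L ≤ x₀ := hL hx₀
    have h2 : x₀ ≤ l₀ := hK hx₀
    simp only [hBdef]; linarith
  have hD0 : 0 < D :=
    div_pos (mul_pos (div_pos hC'pos Perf_pos) hB0) (mul_pos hM hm'pos)
  have claim : ∀ x ∈ K, ∀ t, 1 ≤ t → |δ₀ - w x t| ≤ D / Real.sqrt t := by
    intro x hxK t ht
    have hx : x ≤ l₀ := hK hxK
    have hst : 0 < Real.sqrt t := Real.sqrt_pos.mpr (by linarith)
    have ha1 : m ≤ ψ x t := hψlb x hx t (by linarith)
    have ha2 : ψ x t ≤ C' := hψub x hx t (by linarith)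
    have hψpos : 0 < ψ x t := lt_of_lt_of_le hmpos ha1
    -- |ψ - b| bound
    have habs : |ψ x t - b| ≤ (C'/Perf 1) * Perf (zfun l₀ x t) := by
      apply abs_le.mpr
      constructor
      · have := hdn x hx t ht; linarith
      · have := hup x hx t ht; linarith
    -- Perf bound
    have hPz : Perf (zfun l₀ x t) ≤ B / Real.sqrt t := by
      calc Perf (zfun l₀ x t) ≤ zfun l₀ x t := Perf_le (zfun_nonneg hx)
        _ = (l₀ + 1 - x) / Real.sqrt t := rfl
        _ ≤ B / Real.sqrt t := by
            gcongr
            have : L ≤ x := hL hxK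
            simp only [hBdef]
            linarith
    -- from ψ to w via the logarithm
    have hlogψ : Real.log (ψ x t) = -(M * w x t) := by
      simp only [hψdef]; exact Real.log_exp _
    have hlogb : Real.log b = -(M * δ₀) := by
      simp only [hbdef]; exact Real.log_exp _
    have hmin : m' ≤ min (ψ x t) b := le_min (le_trans (min_le_left _ _) ha1)
      (min_le_right _ _)
    have hlog := abs_log_sub_log_le hψpos hbpos
    have h5 : |Real.log (ψ x t) - Real.log b| ≤ |ψ x t - b| / m' := by
      calc |Real.log (ψ x t) - Real.log b| ≤ |ψ x t - b| / min (ψ x t) b := hlog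
        _ ≤ |ψ x t - b| / m' := by gcongr
    have h6 : |Real.log (ψ x t) - Real.log b| = M * |δ₀ - w x t| := by
      rw [hlogψ, hlogb]
      rw [show -(M * w x t) - -(M * δ₀) = M * (δ₀ - w x t) by ring]
      rw [abs_mul, abs_of_pos hM]
    have h7 : M * |δ₀ - w x t| ≤ ((C'/Perf 1) * (B / Real.sqrt t)) / m' := by
      rw [← h6]
      calc |Real.log (ψ x t) - Real.log b| ≤ |ψ x t - b| / m' := h5
        _ ≤ ((C'/Perf 1) * (B / Real.sqrt t)) / m' := by
            have hstep : |ψ x t - b| ≤ (C'/Perf 1) * (B / Real.sqrt t) :=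
              le_trans habs
                (mul_le_mul_of_nonneg_left hPz (div_pos hC'pos Perf_pos).le)
            gcongr
    have heq : D / Real.sqrt t = ((C'/Perf 1) * (B / Real.sqrt t)) / m' / M := by
      simp only [hDdef]
      field_simp
    rw [heq, le_div_iff₀ hM]
    calc |δ₀ - w x t| * M = M * |δ₀ - w x t| := mul_comm _ _
      _ ≤ ((C'/Perf 1) * (B / Real.sqrt t)) / m' := h7
  -- conclude uniform convergence
  rw [Metric.tendstoUniformlyOn_iff]
  intro ε' hε'
  have hDe : 0 ≤ D/ε' + 1 := by positivity
  filter_upwards [eventually_ge_atTop (max 1 ((D/ε' + 1)^2))] with t htT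
  intro x hxK
  have ht1 : 1 ≤ t := le_trans (le_max_left _ _) htT
  have hst : 0 < Real.sqrt t := Real.sqrt_pos.mpr (by linarith)
  have hsqt : D/ε' + 1 ≤ Real.sqrt t := by
    have h1 : (D/ε' + 1)^2 ≤ t := le_trans (le_max_right _ _) htT
    calc D/ε' + 1 = Real.sqrt ((D/ε' + 1)^2) := (Real.sqrt_sq hDe).symm
      _ ≤ Real.sqrt t := Real.sqrt_le_sqrt h1
  have hlt : D / Real.sqrt t < ε' := by
    rw [div_lt_iff₀ hst]
    have : ε' * (D/ε' + 1) = D + ε' := by field_simp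
    nlinarith [mul_le_mul_of_nonneg_left hsqt hε'.le]
  have := claim x hxK t ht1
  rw [Real.dist_eq]
  calc |δ₀ - w x t| ≤ D / Real.sqrt t := this
    _ < ε' := hlt
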